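/- Let G be a finite group, let H and K be subgroups of G, let V be a finite-dimensional complex inner product space, and let ρ : G → GL(V) be a representation that is unitary with respect to the inner product (i.e., ⟨ρ(g)v, ρ(g)w⟩ = ⟨v,w⟩ for all g ∈ G and v, w ∈ V). Assume the subspace of vectors fixed by ρ(h) for all h ∈ H is one-dimensional, and likewise the subspace of vectors fixed by ρ(k) for all k ∈ K is one-dimensional. Let v_H be an H-fixed vector with ‖v_H‖ = 1 and v_K a K-fixed vector with ‖v_K‖ = 1. Then |⟨v_H, v_K⟩|² = (1/(|H|·|K|)) · Σ_{h ∈ H} Σ_{k ∈ K} tr(ρ(hk)), where tr denotes the trace of the linear operator ρ(hk) on V. -/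

import Mathlib

/-- The subspace of vectors fixed by `ρ(h)` for all `h` in the subgroup `H`. -/
def fixedSubmodule {k G V : Type*} [CommRing k] [Group G] [AddCommGroup V] [Module k V]
    (ρ : Representation k G V) (H : Subgroup G) : Submodule k V where
  carrier := {v | ∀ h ∈ H, ρ h v = v}
  add_mem' := by
    intro a b ha hb h hh
    simp [map_add, ha h hh, hb h hh]
  zero_mem' := by
    intro h hh
    simp
  smul_mem' := by
    intro c v hv h hh
    simp [map_smul, hv h hh]

lemma trace_end_complex (f : ℂ →ₗ[ℂ] ℂ) : LinearMap.trace ℂ ℂ f = f 1 := by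
  have h : f = f 1 • LinearMap.id := by
    ext; simp [mul_comm]
  rw [h, map_smul, LinearMap.trace_id]
  simp

lemma avg_proj {G : Type*} [Group G] (H : Subgroup G) [Fintype H]
    {V : Type*} [NormedAddCommGroup V] [InnerProductSpace ℂ V] [FiniteDimensional ℂ V]
    (ρ : Representation ℂ G V)
    (hunit : ∀ (g : G) (v w : V), (inner ℂ (ρ g v) (ρ g w) : ℂ) = inner ℂ v w)
    (hH : Module.finrank ℂ (fixedSubmodule ρ H) = 1)
    (vH : V) (hvH : vH ∈ fixedSubmodule ρ H) (hnH : ‖vH‖ = 1) (v : V) :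
    ∑ h : H, ρ (h : G) v = ((Fintype.card H : ℂ) * (inner ℂ vH v : ℂ)) • vH := by
  have hvH0 : vH ≠ 0 := by
    intro h; rw [h, norm_zero] at hnH; norm_num at hnH
  have hspan : (ℂ ∙ vH) = fixedSubmodule ρ H := by
    apply Submodule.eq_of_le_of_finrank_le
    · rw [Submodule.span_le, Set.singleton_subset_iff]; exact hvH
    · rw [hH, finrank_span_singleton hvH0]
  set S := ∑ h : H, ρ (h : G) v with hS
  have hSfix : S ∈ fixedSubmodule ρ H := by
    intro g hg
    rw [hS, map_sum]
    refine Fintype.sum_equiv (Equiv.mulLeft (⟨g, hg⟩ : H)) _ _ (fun h => ?_)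
    rw [← Module.End.mul_apply, ← map_mul]
    rfl
  rw [← hspan] at hSfix
  obtain ⟨c, hc⟩ := Submodule.mem_span_singleton.mp hSfix
  have hinner : (inner ℂ vH S : ℂ) = (Fintype.card H : ℂ) * inner ℂ vH v := by
    rw [hS, inner_sum]
    rw [Finset.sum_congr rfl (fun h _ => ?_), Finset.sum_const, Finset.card_univ,
      nsmul_eq_mul]
    have h1 := hunit ((h : G))⁻¹ vH (ρ (h : G) v)
    rw [← Module.End.mul_apply, ← map_mul, inv_mul_cancel, map_one,
      Module.End.one_apply] at h1
    have h2 : ρ ((h : G))⁻¹ vH = vH := by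
      have := hvH ((h : G))⁻¹ ?_
      · exact this
      · exact (Subgroup.inv_mem_iff H).mpr h.2
    rw [h2] at h1
    exact h1.symm
  have hnorm : (inner ℂ vH vH : ℂ) = 1 := by
    rw [inner_self_eq_norm_sq_to_K, hnH]; norm_num
  rw [← hc] at hinner ⊢
  rw [inner_smul_right, hnorm, mul_one] at hinner
  rw [hinner]

/-- For a finite group `G` with subgroups `H`, `K`, a unitary representation `ρ` of `G` on a
finite-dimensional complex inner product space `V` whose `H`-fixed and `K`-fixed subspaces
are one-dimensional, and unit fixed vectors `v_H`, `v_K`, one has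
`|⟨v_H, v_K⟩|² = (1/(|H|·|K|)) · Σ_{h ∈ H} Σ_{k ∈ K} tr(ρ(hk))`. -/
theorem correlation_eq_character_sum (G : Type*) [Group G] [Fintype G]
    (H K : Subgroup G) [Fintype H] [Fintype K]
    (V : Type*) [NormedAddCommGroup V] [InnerProductSpace ℂ V] [FiniteDimensional ℂ V]
    (ρ : Representation ℂ G V)
    (hunit : ∀ (g : G) (v w : V), (inner ℂ (ρ g v) (ρ g w) : ℂ) = inner ℂ v w)
    (hH : Module.finrank ℂ (fixedSubmodule ρ H) = 1)
    (hK : Module.finrank ℂ (fixedSubmodule ρ K) = 1)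
    (vH vK : V) (hvH : vH ∈ fixedSubmodule ρ H) (hvK : vK ∈ fixedSubmodule ρ K)
    (hnH : ‖vH‖ = 1) (hnK : ‖vK‖ = 1) :
    ((‖(inner ℂ vH vK : ℂ)‖ ^ 2 : ℝ) : ℂ) =
      (1 / ((Fintype.card H : ℂ) * (Fintype.card K : ℂ))) *
        ∑ h : H, ∑ k : K, LinearMap.trace ℂ V (ρ ((h : G) * (k : G))) := by
  classical
  set cH := (Fintype.card H : ℂ)
  set cK := (Fintype.card K : ℂ)
  set a : ℂ := inner ℂ vH vK
  -- the composite operator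
  set u : V := (cK * cH * a) • vH with hu
  set T : V →ₗ[ℂ] V :=
    (LinearMap.toSpanSingleton ℂ V u) ∘ₗ ((innerₛₗ ℂ) vK) with hT
  have hsum : ∑ h : H, ∑ k : K, (ρ ((h : G) * (k : G)) : V →ₗ[ℂ] V) = T := by
    apply LinearMap.ext; intro v
    have hKv := avg_proj K ρ hunit hK vK hvK hnK v
    have hHv := avg_proj H ρ hunit hH vH hvH hnH vK
    simp only [LinearMap.coe_sum, Finset.sum_apply]
    have step1 : ∀ h : H, ∑ k : K, ρ ((h : G) * (k : G)) v
        = ρ (h : G) (∑ k : K, ρ (k : G) v) := by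
      intro h
      rw [map_sum]
      exact Finset.sum_congr rfl fun k _ => by rw [map_mul, Module.End.mul_apply]
    rw [Finset.sum_congr rfl (fun h _ => step1 h)]
    rw [hKv]
    simp only [map_smul, ← Finset.smul_sum]
    rw [hHv, hT, hu]
    simp only [LinearMap.comp_apply, LinearMap.toSpanSingleton_apply, innerₛₗ_apply_apply,
      smul_smul]
    ring_nf
    simp only [cH, cK, a]
    congr 1; ring
  have htr : LinearMap.trace ℂ V T = cK * cH * (a * (starRingEnd ℂ) a) := by
    rw [hT, LinearMap.trace_comp_comm']
    rw [trace_end_complex]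
    simp only [LinearMap.comp_apply, LinearMap.toSpanSingleton_apply, one_smul,
      innerₛₗ_apply_apply, hu, inner_smul_right]
    rw [← inner_conj_symm vK vH]
    simp only [a]
    ring
  have hsum2 : ∑ h : H, ∑ k : K, LinearMap.trace ℂ V (ρ ((h : G) * (k : G)))
      = cK * cH * (a * (starRingEnd ℂ) a) := by
    rw [← htr, ← hsum, map_sum]
    exact Finset.sum_congr rfl fun h _ => (map_sum _ _ _).symm
  rw [hsum2]
  have hcH : cH ≠ 0 := Nat.cast_ne_zero.mpr Fintype.card_ne_zero
  have hcK : cK ≠ 0 := Nat.cast_ne_zero.mpr Fintype.card_ne_zero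
  have habs : ((‖a‖ ^ 2 : ℝ) : ℂ) = a * (starRingEnd ℂ) a := by
    rw [Complex.sq_norm, Complex.mul_conj]
  rw [habs]
  field_simp
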